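/- arXiv:1511.00820 — 5 statements merged into one kernel-verified Lean document; each statement's English description precedes it below -/
import Mathlib

section
/- Let B, W ⊆ ℝ^d be finite nonempty sets and u ∈ ℝ^d. Then Σ_{S ⊆ B} (−1)^{|S|} h((S ∪ W)ˇ, u) = −( −h(B ⊕ W̌, u) )⁺, where the sum runs over all subsets S of B (for S = ∅ the summand is h(W̌,u)). Equivalently, Σ_{S ⊆ B} (−1)^{|S|} max_{x ∈ S∪W} ⟨−x,u⟩ = −max(0, min_{w∈W} ⟨w,u⟩ − max_{b∈B} ⟨b,u⟩). -/
lemma hm_sup'_neg {α : Type*} (s : Finset α) (hs : s.Nonempty) (g : α → ℝ) :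
    s.sup' hs (fun x => -g x) = -s.inf' hs g := by
  apply le_antisymm
  · exact Finset.sup'_le _ _ fun w hw => neg_le_neg (Finset.inf'_le _ hw)
  · rw [neg_le]
    refine Finset.le_inf' _ _ fun w hw => ?_
    have h := Finset.le_sup' (fun x => -g x) hw
    linarith

lemma hm_inf'_neg {α : Type*} (s : Finset α) (hs : s.Nonempty) (g : α → ℝ) :
    s.inf' hs (fun x => -g x) = -s.sup' hs g := by
  have := hm_sup'_neg s hs (fun x => -g x)
  simp only [neg_neg] at this
  linarith

lemma hm_key {α : Type*} [DecidableEq α] (f : α → ℝ) (B : Finset α) (hB : B.Nonempty) :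
    ∀ (W : Finset α) (hW : W.Nonempty),
    (∑ S ∈ B.powerset,
        (-1 : ℝ) ^ S.card * (S ∪ W).sup' (hW.mono Finset.subset_union_right) f) =
      W.sup' hW f - B.inf' hB fun b => max (f b) (W.sup' hW f) := by
  induction hB using Finset.Nonempty.cons_induction with
  | singleton a =>
    intro W hW
    rw [show ({a} : Finset α).powerset = {∅, {a}} from rfl]
    rw [Finset.sum_insert (by simp [(Finset.singleton_ne_empty a).symm])]
    rw [Finset.sum_singleton]
    simp only [Finset.card_empty, Finset.card_singleton, pow_zero, pow_one, one_mul,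
      Finset.empty_union, Finset.inf'_singleton, neg_one_mul]
    rw [Finset.sup'_union (Finset.singleton_nonempty a) hW f, Finset.sup'_singleton]
    ring
  | cons a B' ha hB' IH =>
    intro W hW
    simp only [Finset.cons_eq_insert]
    rw [Finset.sum_powerset_insert ha]
    have h2 : (∑ S ∈ B'.powerset,
        (-1 : ℝ) ^ (insert a S).card *
          ((insert a S ∪ W).sup' (hW.mono Finset.subset_union_right) f)) =
        -(∑ S ∈ B'.powerset, (-1 : ℝ) ^ S.card *
          ((S ∪ insert a W).sup'
            ((Finset.insert_nonempty a W).mono Finset.subset_union_right) f)) := by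
      rw [← Finset.sum_neg_distrib]
      refine Finset.sum_congr rfl fun S hS => ?_
      have haS : a ∉ S := fun h => ha (Finset.mem_powerset.mp hS h)
      have hcard : (insert a S).card = S.card + 1 := Finset.card_insert_of_notMem haS
      have hset : insert a S ∪ W = S ∪ insert a W := by
        ext x; simp [Finset.mem_insert, Finset.mem_union]
      rw [hcard, pow_succ]
      have : ((insert a S ∪ W).sup' (hW.mono Finset.subset_union_right) f) =
          ((S ∪ insert a W).sup' ((Finset.insert_nonempty a W).mono Finset.subset_union_right) f) := by
        congr 1
      rw [this]; ring
    rw [h2, IH W hW, IH (insert a W) (Finset.insert_nonempty a W)]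
    set c : ℝ := W.sup' hW f with hc
    have hc' : (insert a W).sup' (Finset.insert_nonempty a W) f = max (f a) c := by
      rw [Finset.sup'_insert]
    rw [hc']
    have hinf : (insert a B').inf' (Finset.insert_nonempty a B')
        (fun b => max (f b) c) = min (max (f a) c)
          (B'.inf' hB' fun b => max (f b) c) := by
      rw [Finset.inf'_insert]
    rw [hinf]
    set m : ℝ := B'.inf' hB' fun b => max (f b) c with hm
    have hm' : (B'.inf' hB' fun b => max (f b) (max (f a) c)) = max m (max (f a) c) := by
      have hd := Finset.inf'_sup_distrib_right hB' (fun b => max (f b) c) (max (f a) c)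
      rw [← hm] at hd
      rw [hd]
      refine Finset.inf'_congr hB' rfl fun b _ => ?_
      rw [sup_assoc, sup_eq_right.mpr (le_sup_right : c ≤ f a ⊔ c)]
    rw [hm']
    rcases le_total m (max (f a) c) with h | h
    · rw [max_eq_right h, min_eq_right h]; ring
    · rw [max_eq_left h, min_eq_left h]; ring

/-- First-order combinatorial identity for hit-and-miss probabilities:
`∑_{S ⊆ B} (−1)^{|S|} h((S ∪ W)ˇ, u) = −(−h(B ⊕ W̌, u))⁺`, i.e.
`∑_{S ⊆ B} (−1)^{|S|} max_{x∈S∪W} ⟨−x,u⟩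
  = −max(0, min_{w∈W} ⟨w,u⟩ − max_{b∈B} ⟨b,u⟩)`. -/
theorem hit_and_miss_first_order_identity (d : ℕ)
    [DecidableEq (EuclideanSpace ℝ (Fin d))]
    (B W : Finset (EuclideanSpace ℝ (Fin d))) (hB : B.Nonempty) (hW : W.Nonempty)
    (u : EuclideanSpace ℝ (Fin d)) :
    (∑ S ∈ B.powerset,
        (-1 : ℝ) ^ S.card *
          (S ∪ W).sup' (hW.mono Finset.subset_union_right)
            (fun x => -(inner ℝ x u : ℝ))) =
      -max 0 (W.inf' hW (fun w => (inner ℝ w u : ℝ)) -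
        B.sup' hB (fun b => (inner ℝ b u : ℝ))) := by
  rw [hm_key (fun x => -(inner ℝ x u : ℝ)) B hB W hW]
  set I : ℝ := W.inf' hW fun w => (inner ℝ w u : ℝ) with hI
  set Sb : ℝ := B.sup' hB fun b => (inner ℝ b u : ℝ) with hSb
  have h1 : W.sup' hW (fun x => -(inner ℝ x u : ℝ)) = -I := hm_sup'_neg W hW _
  rw [h1]
  have h2 : (B.inf' hB fun b => max (-(inner ℝ b u : ℝ)) (-I)) = -min Sb I := by
    have e1 : (B.inf' hB fun b => max (-(inner ℝ b u : ℝ)) (-I)) =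
        B.inf' hB fun b => -min ((inner ℝ b u : ℝ)) I := by
      refine Finset.inf'_congr hB rfl fun b _ => ?_
      rw [max_neg_neg]
    rw [e1, hm_inf'_neg B hB (fun b => min ((inner ℝ b u : ℝ)) I)]
    have e2 := Finset.sup'_inf_distrib_right hB (fun b => (inner ℝ b u : ℝ)) I
    rw [← hSb] at e2
    rw [show (fun b => min ((inner ℝ b u : ℝ)) I) = (fun b => (inner ℝ b u : ℝ) ⊓ I) from rfl, ← e2]
  rw [h2]
  rcases le_total Sb I with h | h
  · rw [min_eq_left h, max_eq_right (by linarith)]; ring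
  · rw [min_eq_right h, max_eq_left (by linarith)]; ring
end

section
/- Let B, W ⊆ ℝ^d be finite nonempty sets and u ∈ ℝ^d. Then Σ_{S ⊆ B} (−1)^{|S|+1} h((S ∪ W)ˇ, u)² = ( h(B,u)² − h(W̌,u)² ) · 1{h(B ⊕ W̌, u) < 0}, where the sum runs over all subsets S of B (for S = ∅ the summand is −h(W̌,u)²). Equivalently, Σ_{S ⊆ B} (−1)^{|S|+1} ( max_{x ∈ S∪W} ⟨−x,u⟩ )² = ( (max_{b∈B}⟨b,u⟩)² − (min_{w∈W}⟨w,u⟩)² ) if max_{b∈B}⟨b,u⟩ < min_{w∈W}⟨w,u⟩, and equals 0 otherwise. -/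
lemma my_sup'_neg {X : Type*} (s : Finset X) (h : s.Nonempty) (g : X → ℝ) :
    s.sup' h (fun x => -(g x)) = - s.inf' h g := by
  refine le_antisymm (Finset.sup'_le _ _ fun x hx => neg_le_neg (Finset.inf'_le _ hx)) ?_
  rw [neg_le]
  exact Finset.le_inf' _ _ fun x hx =>
    neg_le.mpr (Finset.le_sup' (fun x => -(g x)) hx)

lemma alt_aux {X : Type*} [DecidableEq X] (W : Finset X) (hW : W.Nonempty) (f : X → ℝ)
    (B : Finset X) :
    ∀ (hB : B.Nonempty) (F : ℝ → ℝ),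
      ∑ S ∈ B.powerset, (-1:ℝ)^(S.card+1) *
          F ((S ∪ W).sup' (hW.mono Finset.subset_union_right) f)
        = F (max (W.sup' hW f) (B.inf' hB f)) - F (W.sup' hW f) := by
  induction B using Finset.induction_on with
  | empty => intro h; exact absurd rfl h.ne_empty
  | @insert a B ha IH =>
    intro hB F
    have hdisj : Disjoint B.powerset (B.powerset.image (insert a)) := by
      rw [Finset.disjoint_left]
      intro S hS hS'
      obtain ⟨T, hT, rfl⟩ := Finset.mem_image.mp hS'
      exact ha (Finset.mem_powerset.mp hS (Finset.mem_insert_self a T))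
    have hinj : ∀ x ∈ B.powerset, ∀ y ∈ B.powerset, insert a x = insert a y → x = y := by
      intro x hx y hy h
      have hax : a ∉ x := fun h' => ha (Finset.mem_powerset.mp hx h')
      have hay : a ∉ y := fun h' => ha (Finset.mem_powerset.mp hy h')
      rw [← Finset.erase_insert hax, ← Finset.erase_insert hay, h]
    have hsup : ∀ S : Finset X,
        ((insert a S ∪ W)).sup' (hW.mono Finset.subset_union_right) f
          = f a ⊔ (S ∪ W).sup' (hW.mono Finset.subset_union_right) f := by
      intro S
      calc (insert a S ∪ W).sup' (hW.mono Finset.subset_union_right) f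
          = (insert a (S ∪ W)).sup'
              (Finset.insert_nonempty a _) f :=
            Finset.sup'_congr _ (Finset.insert_union a S W) (fun x _ => rfl)
        _ = f a ⊔ (S ∪ W).sup' (hW.mono Finset.subset_union_right) f :=
            Finset.sup'_insert _ _
    by_cases hBne : B.Nonempty
    · have h1 : ∑ S ∈ (insert a B).powerset, (-1:ℝ)^(S.card+1) *
            F ((S ∪ W).sup' (hW.mono Finset.subset_union_right) f)
          = ∑ S ∈ B.powerset, (-1:ℝ)^(S.card+1) *
              ((fun t => F t - F (f a ⊔ t))
                ((S ∪ W).sup' (hW.mono Finset.subset_union_right) f)) := by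
        rw [Finset.powerset_insert, Finset.sum_union hdisj, Finset.sum_image hinj,
          ← Finset.sum_add_distrib]
        refine Finset.sum_congr rfl fun S hS => ?_
        have haS : a ∉ S := fun h' => ha (Finset.mem_powerset.mp hS h')
        rw [Finset.card_insert_of_notMem haS, hsup S]
        ring
      rw [h1, IH hBne (fun t => F t - F (f a ⊔ t))]
      
      rw [Finset.inf'_insert (H := hBne)]
      set c := W.sup' hW f with hc
      set m := B.inf' hBne f with hm
      rcases le_total (f a) m with hle | hle
      · rw [inf_eq_left.mpr hle]
        have h2 : f a ⊔ (c ⊔ m) = c ⊔ m :=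
          sup_eq_right.mpr (le_trans hle le_sup_right)
        rw [h2, sup_comm (f a) c]
        ring
      · rw [inf_eq_right.mpr hle]
        have h2 : f a ⊔ (c ⊔ m) = f a ⊔ c := by
          rw [sup_comm c m, ← sup_assoc, sup_eq_left.mpr hle]
        rw [h2]
        ring
    · rw [Finset.not_nonempty_iff_eq_empty] at hBne
      subst hBne
      have he : ((∅ : Finset X) ∪ W).sup' (hW.mono Finset.subset_union_right) f
          = W.sup' hW f :=
        Finset.sup'_congr _ (Finset.empty_union W) (fun x _ => rfl)
      have hins : (insert a (∅ : Finset X)).inf' hB f = f a := by simp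
      rw [Finset.powerset_insert, Finset.sum_union hdisj, Finset.sum_image hinj]
      simp only [Finset.powerset_empty, Finset.sum_singleton, Finset.card_empty,
        hsup, he, hins, Finset.card_insert_of_notMem (Finset.notMem_empty a)]
      rw [sup_comm (f a) (W.sup' hW f)]
      ring

lemma my_inf'_neg {X : Type*} (s : Finset X) (h : s.Nonempty) (g : X → ℝ) :
    s.inf' h (fun x => -(g x)) = - s.sup' h g := by
  refine le_antisymm ?_ (Finset.le_inf' _ _ fun x hx => neg_le_neg (Finset.le_sup' _ hx))
  rw [le_neg]
  exact Finset.sup'_le _ _ fun x hx =>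
    le_neg.mpr (Finset.inf'_le (fun x => -(g x)) hx)

/-- Second-order combinatorial identity for hit-and-miss probabilities:
`∑_{S ⊆ B} (−1)^{|S|+1} h((S ∪ W)ˇ, u)²
  = (h(B,u)² − h(W̌,u)²) · 1{h(B ⊕ W̌, u) < 0}`, i.e. the alternating sum of
`(max_{x∈S∪W} ⟨−x,u⟩)²` equals `(max_{b∈B}⟨b,u⟩)² − (min_{w∈W}⟨w,u⟩)²`
if `max_{b∈B}⟨b,u⟩ < min_{w∈W}⟨w,u⟩`, and `0` otherwise. -/
theorem hit_and_miss_second_order_identity (d : ℕ)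
    [DecidableEq (EuclideanSpace ℝ (Fin d))]
    (B W : Finset (EuclideanSpace ℝ (Fin d))) (hB : B.Nonempty) (hW : W.Nonempty)
    (u : EuclideanSpace ℝ (Fin d)) :
    (∑ S ∈ B.powerset,
        (-1 : ℝ) ^ (S.card + 1) *
          ((S ∪ W).sup' (hW.mono Finset.subset_union_right)
            (fun x => -(inner ℝ x u : ℝ))) ^ 2) =
      if B.sup' hB (fun b => (inner ℝ b u : ℝ)) <
          W.inf' hW (fun w => (inner ℝ w u : ℝ)) then
        (B.sup' hB (fun b => (inner ℝ b u : ℝ))) ^ 2 -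
          (W.inf' hW (fun w => (inner ℝ w u : ℝ))) ^ 2
      else 0 := by
  have key := alt_aux W hW (fun x => -(inner ℝ x u : ℝ)) B hB (fun t => t ^ 2)
  rw [my_sup'_neg W hW (fun w => (inner ℝ w u : ℝ)),
    my_inf'_neg B hB (fun b => (inner ℝ b u : ℝ))] at key
  refine key.trans ?_
  set M := B.sup' hB (fun b => (inner ℝ b u : ℝ)) with hM
  set m := W.inf' hW (fun w => (inner ℝ w u : ℝ)) with hm
  split_ifs with h
  · rw [max_eq_right (neg_le_neg h.le)]
    ring
  · rw [max_eq_left (neg_le_neg (not_lt.mp h))]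
    ring
end

section
/- Let B ⊆ ℝ^d be a finite nonempty set, u ∈ ℝ^d, and q : ℝ^d → ℝ an arbitrary function. Then Σ_{∅ ≠ S ⊆ B} (−1)^{|S|+1} m_q(S) = M_q(B), where the sum runs over all nonempty subsets S of B. In words: the alternating sum over nonempty subsets S of B of the minimum of q over the ⟨·,u⟩-minimizers of S equals the maximum of q over the ⟨·,u⟩-maximizers of B. -/
/-- `minOnMinimizers u q P hP` is
`m_q(P) = min{ q(p) : p ∈ P, ⟨p,u⟩ = min_{p'∈P} ⟨p',u⟩ }`,
the minimum of `q` over the `⟨·,u⟩`-minimizers of the finite nonempty set `P`. -/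
noncomputable def minOnMinimizers {d : ℕ} (u : EuclideanSpace ℝ (Fin d))
    (q : EuclideanSpace ℝ (Fin d) → ℝ)
    (P : Finset (EuclideanSpace ℝ (Fin d))) (hP : P.Nonempty) : ℝ :=
  (P.filter (fun p =>
      (inner ℝ p u : ℝ) = P.inf' hP (fun p' => (inner ℝ p' u : ℝ)))).inf'
    (by
      obtain ⟨b, hb, hbe⟩ := P.exists_mem_eq_inf' hP (fun p' => (inner ℝ p' u : ℝ))
      exact ⟨b, Finset.mem_filter.2 ⟨hb, hbe.symm⟩⟩) q

/-- `maxOnMaximizers u q P hP` is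
`M_q(P) = max{ q(p) : p ∈ P, ⟨p,u⟩ = max_{p'∈P} ⟨p',u⟩ }`,
the maximum of `q` over the `⟨·,u⟩`-maximizers of the finite nonempty set `P`. -/
noncomputable def maxOnMaximizers {d : ℕ} (u : EuclideanSpace ℝ (Fin d))
    (q : EuclideanSpace ℝ (Fin d) → ℝ)
    (P : Finset (EuclideanSpace ℝ (Fin d))) (hP : P.Nonempty) : ℝ :=
  (P.filter (fun p =>
      (inner ℝ p u : ℝ) = P.sup' hP (fun p' => (inner ℝ p' u : ℝ)))).sup'
    (by
      obtain ⟨b, hb, hbe⟩ := P.exists_mem_eq_sup' hP (fun p' => (inner ℝ p' u : ℝ))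
      exact ⟨b, Finset.mem_filter.2 ⟨hb, hbe.symm⟩⟩) q

open Finset


/-- General alternating-sum identity in a linear order. -/
private theorem altMin {α : Type*} [LinearOrder α] (f : α → ℝ) (B : Finset α) :
    ∀ hB : B.Nonempty,
      (∑ S ∈ B.powerset,
          if hS : S.Nonempty then (-1 : ℝ) ^ (S.card + 1) * f (S.min' hS) else 0) =
        f (B.max' hB) := by
  classical
  induction B using Finset.strongInduction with
  | _ B ih =>
  intro hB
  set b := B.min' hB with hb
  have hbB : b ∈ B := B.min'_mem hB
  have hbnot : b ∉ B.erase b := Finset.notMem_erase b B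
  have hBi : B = insert b (B.erase b) := (Finset.insert_erase hbB).symm
  conv_lhs => rw [hBi]
  rw [Finset.sum_powerset_insert hbnot]
  have hmin : ∀ S ∈ (B.erase b).powerset, ∀ h : (insert b S).Nonempty,
      (insert b S).min' h = b := by
    intro S hS h
    apply le_antisymm
    · exact Finset.min'_le _ b (Finset.mem_insert_self b S)
    · apply Finset.le_min'
      intro y hy
      rcases Finset.mem_insert.1 hy with rfl | hy
      · exact le_rfl
      · exact Finset.min'_le B y (Finset.mem_of_mem_erase (Finset.mem_powerset.1 hS hy))
  have h2 : (∑ S ∈ (B.erase b).powerset,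
      if hS : (insert b S).Nonempty then
        (-1 : ℝ) ^ ((insert b S).card + 1) * f ((insert b S).min' hS) else 0)
      = ∑ S ∈ (B.erase b).powerset, (-1 : ℝ) ^ S.card * f b := by
    apply Finset.sum_congr rfl
    intro S hS
    have hne : (insert b S).Nonempty := Finset.insert_nonempty b S
    rw [dif_pos hne, hmin S hS hne]
    have hbS : b ∉ S := fun h => hbnot (Finset.mem_powerset.1 hS h)
    rw [Finset.card_insert_of_notMem hbS]
    ring
  rw [h2, ← Finset.sum_mul]
  have h3 : (∑ S ∈ (B.erase b).powerset, (-1 : ℝ) ^ S.card)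
      = if B.erase b = ∅ then 1 else 0 := by
    have h := @Finset.sum_powerset_neg_one_pow_card _ _ (B.erase b)
    have := congrArg (fun z : ℤ => (z : ℝ)) h
    push_cast at this
    rw [this]
  by_cases hE : B.erase b = ∅
  · rw [h3, if_pos hE, hE]
    simp only [Finset.powerset_empty, Finset.sum_singleton,
      Finset.not_nonempty_empty, dif_neg, not_false_iff, one_mul, zero_add]
    have hBs : B = {b} := by rw [hBi, hE]; rfl
    have hmax : B.max' hB = b :=
      Finset.mem_singleton.1 (by rw [← hBs]; exact B.max'_mem hB)
    rw [hmax]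
  · have hEne : (B.erase b).Nonempty := Finset.nonempty_iff_ne_empty.2 hE
    rw [h3, if_neg hE, zero_mul, add_zero]
    rw [ih (B.erase b) (Finset.erase_ssubset hbB) hEne]
    congr 1
    apply le_antisymm
    · apply Finset.max'_le; intro y hy
      exact Finset.le_max' B y (Finset.mem_of_mem_erase hy)
    · apply Finset.max'_le; intro y hy
      rcases eq_or_ne y b with rfl | hne
      · exact le_trans (Finset.min'_le B _ (Finset.mem_of_mem_erase ((B.erase b).max'_mem hEne)))
          (Finset.le_max' _ _ ((B.erase b).max'_mem hEne))
      · exact Finset.le_max' _ y (Finset.mem_erase.2 ⟨hne, hy⟩)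

/-- A linear order on `Lex (Fin d → ℝ)`, provided as an instance to help
typeclass inference (the generic search gets stuck for a variable `d`). -/
noncomputable instance myLexLin (d : ℕ) : LinearOrder (Lex (Fin d → ℝ)) :=
  have h : WellFoundedLT (Fin d) := inferInstance
  @Pi.Lex.linearOrder (Fin d) (fun _ => ℝ) inferInstance h inferInstance

/-- Lexicographic key: first the linear functional, then `q`, then the point itself. -/
private noncomputable def auxKey {d : ℕ} (u : EuclideanSpace ℝ (Fin d))
    (q : EuclideanSpace ℝ (Fin d) → ℝ) (p : EuclideanSpace ℝ (Fin d)) :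
    ℝ ×ₗ (ℝ ×ₗ Lex (Fin d → ℝ)) :=
  toLex ((inner ℝ p u : ℝ), toLex (q p, toLex (WithLp.equiv 2 (Fin d → ℝ) p)))

private def auxVal {d : ℕ} (x : ℝ ×ₗ (ℝ ×ₗ Lex (Fin d → ℝ))) : ℝ :=
  (ofLex (ofLex x).2).1

private theorem auxKey_inj {d : ℕ} (u : EuclideanSpace ℝ (Fin d))
    (q : EuclideanSpace ℝ (Fin d) → ℝ) : Function.Injective (auxKey u q) := by
  intro p p' h
  unfold auxKey at h
  have h3 := congrArg (fun x => ofLex (ofLex (ofLex x).2).2) h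
  simpa using (WithLp.equiv 2 (Fin d → ℝ)).injective (by exact h3)

private theorem auxKey_le_inner {d : ℕ} {u : EuclideanSpace ℝ (Fin d)}
    {q : EuclideanSpace ℝ (Fin d) → ℝ} {p p' : EuclideanSpace ℝ (Fin d)}
    (h : auxKey u q p ≤ auxKey u q p') : (inner ℝ p u : ℝ) ≤ inner ℝ p' u := by
  rcases Prod.Lex.le_iff.1 h with h1 | ⟨h1, _⟩
  · exact le_of_lt h1
  · exact le_of_eq h1

private theorem auxKey_le_q {d : ℕ} {u : EuclideanSpace ℝ (Fin d)}
    {q : EuclideanSpace ℝ (Fin d) → ℝ} {p p' : EuclideanSpace ℝ (Fin d)}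
    (h : auxKey u q p ≤ auxKey u q p') (he : (inner ℝ p u : ℝ) = inner ℝ p' u) :
    q p ≤ q p' := by
  rcases Prod.Lex.le_iff.1 h with h1 | ⟨_, h2⟩
  · exact absurd he (ne_of_lt h1)
  · rcases Prod.Lex.le_iff.1 h2 with h3 | ⟨h3, _⟩
    · exact le_of_lt h3
    · exact le_of_eq h3

private theorem auxVal_key {d : ℕ} (u : EuclideanSpace ℝ (Fin d))
    (q : EuclideanSpace ℝ (Fin d) → ℝ) (p : EuclideanSpace ℝ (Fin d)) :
    auxVal (auxKey u q p) = q p := rfl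

private theorem auxMin_eq {d : ℕ} (u : EuclideanSpace ℝ (Fin d))
    (q : EuclideanSpace ℝ (Fin d) → ℝ)
    (S : Finset (EuclideanSpace ℝ (Fin d))) (hS : S.Nonempty) :
    auxVal ((S.image (auxKey u q)).min' (hS.image _)) = minOnMinimizers u q S hS := by
  classical
  obtain ⟨p₀, hp₀S, hp₀⟩ := Finset.mem_image.1 ((S.image (auxKey u q)).min'_mem (hS.image _))
  have hle : ∀ p ∈ S, auxKey u q p₀ ≤ auxKey u q p := by
    intro p hp
    rw [hp₀]
    exact Finset.min'_le _ _ (Finset.mem_image_of_mem _ hp)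
  have hinner : (inner ℝ p₀ u : ℝ) = S.inf' hS (fun p' => (inner ℝ p' u : ℝ)) := by
    apply le_antisymm
    · exact Finset.le_inf' _ _ fun p hp => auxKey_le_inner (hle p hp)
    · exact Finset.inf'_le _ hp₀S
  have hp₀f : p₀ ∈ S.filter (fun p =>
      (inner ℝ p u : ℝ) = S.inf' hS (fun p' => (inner ℝ p' u : ℝ))) :=
    Finset.mem_filter.2 ⟨hp₀S, hinner⟩
  have : minOnMinimizers u q S hS = q p₀ := by
    unfold minOnMinimizers
    apply le_antisymm
    · exact Finset.inf'_le _ hp₀f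
    · apply Finset.le_inf'
      intro p hp
      obtain ⟨hpS, hpe⟩ := Finset.mem_filter.1 hp
      exact auxKey_le_q (hle p hpS) (hinner.trans hpe.symm)
  rw [this, ← hp₀, auxVal_key]

private theorem auxMax_eq {d : ℕ} (u : EuclideanSpace ℝ (Fin d))
    (q : EuclideanSpace ℝ (Fin d) → ℝ)
    (S : Finset (EuclideanSpace ℝ (Fin d))) (hS : S.Nonempty) :
    auxVal ((S.image (auxKey u q)).max' (hS.image _)) = maxOnMaximizers u q S hS := by
  classical
  obtain ⟨p₀, hp₀S, hp₀⟩ := Finset.mem_image.1 ((S.image (auxKey u q)).max'_mem (hS.image _))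
  have hle : ∀ p ∈ S, auxKey u q p ≤ auxKey u q p₀ := by
    intro p hp
    rw [hp₀]
    exact Finset.le_max' _ _ (Finset.mem_image_of_mem _ hp)
  have hinner : (inner ℝ p₀ u : ℝ) = S.sup' hS (fun p' => (inner ℝ p' u : ℝ)) := by
    apply le_antisymm
    · exact Finset.le_sup' (fun p' => (inner ℝ p' u : ℝ)) hp₀S
    · exact Finset.sup'_le _ _ fun p hp => auxKey_le_inner (hle p hp)
  have hp₀f : p₀ ∈ S.filter (fun p =>
      (inner ℝ p u : ℝ) = S.sup' hS (fun p' => (inner ℝ p' u : ℝ))) :=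
    Finset.mem_filter.2 ⟨hp₀S, hinner⟩
  have : maxOnMaximizers u q S hS = q p₀ := by
    unfold maxOnMaximizers
    apply le_antisymm
    · apply Finset.sup'_le
      intro p hp
      obtain ⟨hpS, hpe⟩ := Finset.mem_filter.1 hp
      exact auxKey_le_q (hle p hpS) (hpe.trans hinner.symm)
    · exact Finset.le_sup' _ hp₀f
  rw [this, ← hp₀, auxVal_key]

/-- Alternating-sum identity: `∑_{∅ ≠ S ⊆ B} (−1)^{|S|+1} m_q(S) = M_q(B)`. -/
theorem alternating_sum_minOnMinimizers (d : ℕ)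
    (B : Finset (EuclideanSpace ℝ (Fin d))) (hB : B.Nonempty)
    (u : EuclideanSpace ℝ (Fin d)) (q : EuclideanSpace ℝ (Fin d) → ℝ) :
    (∑ S ∈ B.powerset,
        if hS : S.Nonempty then
          (-1 : ℝ) ^ (S.card + 1) * minOnMinimizers u q S hS
        else 0) =
      maxOnMaximizers u q B hB := by
  classical
  rw [← auxMax_eq u q B hB, ← altMin auxVal (B.image (auxKey u q)) (hB.image _)]
  refine Finset.sum_bij (fun S _ => S.image (auxKey u q)) ?_ ?_ ?_ ?_
  · intro S hS
    exact Finset.mem_powerset.2 (Finset.image_subset_image (Finset.mem_powerset.1 hS))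
  · intro S₁ h₁ S₂ h₂ h
    exact Finset.image_injective (auxKey_inj u q) h
  · intro T hT
    refine ⟨B.filter (fun p => auxKey u q p ∈ T), Finset.mem_powerset.2 (Finset.filter_subset _ _), ?_⟩
    apply Finset.Subset.antisymm
    · intro t ht
      obtain ⟨p, hp, rfl⟩ := Finset.mem_image.1 ht
      exact (Finset.mem_filter.1 hp).2
    · intro t ht
      obtain ⟨p, hp, rfl⟩ := Finset.mem_image.1 (Finset.mem_powerset.1 hT ht)
      exact Finset.mem_image_of_mem _ (Finset.mem_filter.2 ⟨hp, ht⟩)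
  · intro S hS
    by_cases hne : S.Nonempty
    · rw [dif_pos hne, dif_pos (hne.image _),
        Finset.card_image_of_injective S (auxKey_inj u q), auxMin_eq u q S hne]
    · rw [dif_neg hne, dif_neg (by simpa [Finset.image_nonempty] using hne)]
end

section
/- Let B, W ⊆ ℝ^d be finite nonempty sets, u ∈ ℝ^d, and q : ℝ^d → ℝ an arbitrary function. Let B₁ = { b ∈ B : ⟨b,u⟩ = max_{b'∈B} ⟨b',u⟩ } be the set of ⟨·,u⟩-maximizers of B. Then Σ_{S ⊆ B} (−1)^{|S|} m_q(S ∪ W) = Σ_{S ⊆ B₁} (−1)^{|S|} m_q(S ∪ W), where both sums run over all (possibly empty) subsets and for S = ∅ the summand is m_q(W). -/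
/-- `minOnMinimizers` only depends on the underlying set. -/
lemma minOnMinimizers_congr {d : ℕ} (u : EuclideanSpace ℝ (Fin d))
    (q : EuclideanSpace ℝ (Fin d) → ℝ)
    {P Q : Finset (EuclideanSpace ℝ (Fin d))} (h : P = Q)
    (hP : P.Nonempty) (hQ : Q.Nonempty) :
    minOnMinimizers u q P hP = minOnMinimizers u q Q hQ := by
  subst h; rfl

/-- Inserting a point whose inner product with `u` is strictly larger than that of some
existing point does not change `minOnMinimizers`. -/
lemma minOnMinimizers_insert {d : ℕ} [DecidableEq (EuclideanSpace ℝ (Fin d))]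
    (u : EuclideanSpace ℝ (Fin d)) (q : EuclideanSpace ℝ (Fin d) → ℝ)
    {P : Finset (EuclideanSpace ℝ (Fin d))} (hP : P.Nonempty)
    {x p : EuclideanSpace ℝ (Fin d)} (hp : p ∈ P)
    (hpx : (inner ℝ p u : ℝ) < (inner ℝ x u : ℝ)) :
    minOnMinimizers u q (insert x P) (hP.mono (P.subset_insert x)) =
      minOnMinimizers u q P hP := by
  have hlt : P.inf' hP (fun p' => (inner ℝ p' u : ℝ)) < (inner ℝ x u : ℝ) :=
    lt_of_le_of_lt (Finset.inf'_le _ hp) hpx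
  have hinf : (insert x P).inf' (hP.mono (P.subset_insert x)) (fun p' => (inner ℝ p' u : ℝ))
      = P.inf' hP (fun p' => (inner ℝ p' u : ℝ)) := by
    rw [Finset.inf'_insert (H := hP)]
    exact inf_eq_right.2 hlt.le
  have hfil : (insert x P).filter
        (fun p' => (inner ℝ p' u : ℝ) =
          (insert x P).inf' (hP.mono (P.subset_insert x)) (fun p'' => (inner ℝ p'' u : ℝ)))
      = P.filter (fun p' => (inner ℝ p' u : ℝ) = P.inf' hP (fun p'' => (inner ℝ p'' u : ℝ))) := by
    ext a
    simp only [Finset.mem_filter, Finset.mem_insert, hinf]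
    constructor
    · rintro ⟨(rfl | haP), he⟩
      · exact absurd he hlt.ne'
      · exact ⟨haP, he⟩
    · rintro ⟨haP, he⟩
      exact ⟨Or.inr haP, he⟩
  unfold minOnMinimizers
  exact Finset.inf'_congr _ hfil (fun _ _ => rfl)

/-- In the alternating sum `∑_{S ⊆ B} (−1)^{|S|} m_q(S ∪ W)`, only the subsets of
the set `B₁` of `⟨·,u⟩`-maximizers of `B` contribute. -/
theorem alternating_sum_reduces_to_maximizers (d : ℕ)
    [DecidableEq (EuclideanSpace ℝ (Fin d))]
    (B W : Finset (EuclideanSpace ℝ (Fin d))) (hB : B.Nonempty) (hW : W.Nonempty)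
    (u : EuclideanSpace ℝ (Fin d)) (q : EuclideanSpace ℝ (Fin d) → ℝ) :
    (∑ S ∈ B.powerset,
        (-1 : ℝ) ^ S.card *
          minOnMinimizers u q (S ∪ W) (hW.mono Finset.subset_union_right)) =
      ∑ S ∈ (B.filter (fun b =>
          (inner ℝ b u : ℝ) = B.sup' hB (fun b' => (inner ℝ b' u : ℝ)))).powerset,
        (-1 : ℝ) ^ S.card *
          minOnMinimizers u q (S ∪ W) (hW.mono Finset.subset_union_right) := by
  classical
  set M : ℝ := B.sup' hB (fun b' => (inner ℝ b' u : ℝ)) with hM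
  set B₁ : Finset (EuclideanSpace ℝ (Fin d)) :=
    B.filter (fun b => (inner ℝ b u : ℝ) = M) with hB₁
  set F : Finset (EuclideanSpace ℝ (Fin d)) → ℝ := fun S =>
    (-1 : ℝ) ^ S.card *
      minOnMinimizers u q (S ∪ W) (hW.mono Finset.subset_union_right) with hF
  obtain ⟨x₀, hx₀B, hx₀⟩ := B.exists_mem_eq_sup' hB (fun b' => (inner ℝ b' u : ℝ))
  have hx₀M : (inner ℝ x₀ u : ℝ) = M := hx₀.symm
  have hB₁B : B₁ ⊆ B := Finset.filter_subset _ _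
  -- split the powerset sum according to whether `S ⊆ B₁`
  have hsplit := Finset.sum_filter_add_sum_filter_not B.powerset
    (fun S => S ⊆ B₁) F
  have h1 : B.powerset.filter (fun S => S ⊆ B₁) = B₁.powerset := by
    ext S
    simp only [Finset.mem_filter, Finset.mem_powerset]
    exact ⟨fun h => h.2, fun h => ⟨h.trans hB₁B, h⟩⟩
  -- key fact: toggling `x₀` in a set containing a non-maximizer doesn't change `m`
  have key : ∀ S ∈ B.powerset.filter (fun S => ¬ S ⊆ B₁),
      ∀ b ∈ S, b ∉ B₁ →
      minOnMinimizers u q ((insert x₀ (S.erase x₀)) ∪ W)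
          (hW.mono Finset.subset_union_right) =
        minOnMinimizers u q ((S.erase x₀) ∪ W) (hW.mono Finset.subset_union_right) := by
    intro S hS b hbS hbB₁
    simp only [Finset.mem_filter, Finset.mem_powerset] at hS
    have hbB : b ∈ B := hS.1 hbS
    have hbM : (inner ℝ b u : ℝ) ≠ M := by
      intro h
      exact hbB₁ (Finset.mem_filter.2 ⟨hbB, h⟩)
    have hblt : (inner ℝ b u : ℝ) < (inner ℝ x₀ u : ℝ) := by
      rw [hx₀M]
      refine lt_of_le_of_ne ?_ hbM
      rw [hM]
      exact Finset.le_sup' (fun b' => (inner ℝ b' u : ℝ)) hbB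
    have hbne : b ≠ x₀ := fun h => hbM (h ▸ hx₀M)
    have hbmem : b ∈ (S.erase x₀) ∪ W :=
      Finset.mem_union_left _ (Finset.mem_erase.2 ⟨hbne, hbS⟩)
    have := minOnMinimizers_insert u q (P := (S.erase x₀) ∪ W)
      (hW.mono Finset.subset_union_right) hbmem hblt
    rw [← this]
    exact minOnMinimizers_congr u q (by rw [Finset.insert_union]) _ _
  have h2 : ∑ S ∈ B.powerset.filter (fun S => ¬ S ⊆ B₁), F S = 0 := by
    have gmem : ∀ S ∈ B.powerset.filter (fun S => ¬ S ⊆ B₁),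
        (if x₀ ∈ S then S.erase x₀ else insert x₀ S)
          ∈ B.powerset.filter (fun S => ¬ S ⊆ B₁) := by
      intro S hS
      rw [Finset.mem_filter, Finset.mem_powerset] at hS
      obtain ⟨b, hbS, hbB₁⟩ := Finset.not_subset.1 hS.2
      rw [Finset.mem_filter, Finset.mem_powerset]
      by_cases hx₀S : x₀ ∈ S
      · simp only [hx₀S, if_true]
        refine ⟨(Finset.erase_subset _ _).trans hS.1, ?_⟩
        intro h
        have hbne : b ≠ x₀ := by
          intro h'; subst h'
          exact hbB₁ (Finset.mem_filter.2 ⟨hS.1 hbS, hx₀M⟩)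
        exact hbB₁ (h (Finset.mem_erase.2 ⟨hbne, hbS⟩))
      · simp only [hx₀S, if_false]
        refine ⟨Finset.insert_subset hx₀B hS.1, ?_⟩
        intro h
        exact hbB₁ (h (Finset.mem_insert_of_mem hbS))
    have hpair : ∀ S ∈ B.powerset.filter (fun S => ¬ S ⊆ B₁),
        F S + F (if x₀ ∈ S then S.erase x₀ else insert x₀ S) = 0 := by
      intro S hS
      have hS' := hS
      rw [Finset.mem_filter, Finset.mem_powerset] at hS'
      obtain ⟨b, hbS, hbB₁⟩ := Finset.not_subset.1 hS'.2
      have hm := key S hS b hbS hbB₁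
      by_cases hx₀S : x₀ ∈ S
      · simp only [hx₀S, if_true]
        have hSi : insert x₀ (S.erase x₀) = S := Finset.insert_erase hx₀S
        have hcard : S.card = (S.erase x₀).card + 1 :=
          (Finset.card_erase_add_one hx₀S).symm
        have hmm : minOnMinimizers u q (S ∪ W) (hW.mono Finset.subset_union_right)
            = minOnMinimizers u q ((S.erase x₀) ∪ W)
                (hW.mono Finset.subset_union_right) := by
          rw [← hm]
          exact minOnMinimizers_congr u q (by rw [hSi]) _ _
        simp only [hF, hmm, hcard, pow_succ]
        ring
      · simp only [hx₀S, if_false]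
        have hcard : (insert x₀ S).card = S.card + 1 :=
          Finset.card_insert_of_notMem hx₀S
        have hmm : minOnMinimizers u q ((insert x₀ S) ∪ W)
              (hW.mono Finset.subset_union_right)
            = minOnMinimizers u q (S ∪ W) (hW.mono Finset.subset_union_right) := by
          rw [Finset.erase_eq_of_notMem hx₀S] at hm
          exact hm
        simp only [hF, hmm, hcard, pow_succ]
        ring
    have hne : ∀ S ∈ B.powerset.filter (fun S => ¬ S ⊆ B₁), F S ≠ 0 →
        (if x₀ ∈ S then S.erase x₀ else insert x₀ S) ≠ S := by
      intro S _ _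
      by_cases hx₀S : x₀ ∈ S
      · simp only [hx₀S, if_true]
        intro h
        have := Finset.notMem_erase x₀ S
        rw [h] at this
        exact this hx₀S
      · simp only [hx₀S, if_false]
        intro h
        apply hx₀S
        rw [← h]
        exact Finset.mem_insert_self x₀ S
    have hinv : ∀ S ∈ B.powerset.filter (fun S => ¬ S ⊆ B₁),
        (if x₀ ∈ (if x₀ ∈ S then S.erase x₀ else insert x₀ S)
          then (if x₀ ∈ S then S.erase x₀ else insert x₀ S).erase x₀
          else insert x₀ (if x₀ ∈ S then S.erase x₀ else insert x₀ S)) = S := by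
      intro S _
      by_cases hx₀S : x₀ ∈ S
      · simp only [hx₀S, if_true, Finset.notMem_erase x₀ S, if_false,
          Finset.insert_erase hx₀S]
      · simp only [hx₀S, if_false, Finset.mem_insert_self x₀ S, if_true,
          Finset.erase_insert hx₀S]
    exact Finset.sum_involution (fun S _ => if x₀ ∈ S then S.erase x₀ else insert x₀ S)
      hpair hne gmem hinv
  rw [h1, h2, add_zero] at hsplit
  exact hsplit.symm
end

section
/- Let B, W ⊆ ℝ^d be finite nonempty sets, u ∈ ℝ^d, and q : ℝ^d → ℝ an arbitrary function. Then the alternating sum Σ_{S ⊆ B} (−1)^{|S|} m_q(S ∪ W), taken over all (possibly empty) subsets S of B (with summand m_q(W) for S = ∅), equals: (i) m_q(W) − M_q(B) if max_{b∈B} ⟨b,u⟩ < min_{w∈W} ⟨w,u⟩; (ii) 0 if max_{b∈B} ⟨b,u⟩ > min_{w∈W} ⟨w,u⟩; (iii) ( m_q(W) − M_q(B) )⁺ = max(0, m_q(W) − M_q(B)) if max_{b∈B} ⟨b,u⟩ = min_{w∈W} ⟨w,u⟩. -/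
open Finset

private lemma aux_sum {γ K : Type*} [LinearOrder K] [DecidableEq γ]
    (k : γ → K) (π : K → ℝ) (B : Finset γ) (b0 : γ) (hb0 : b0 ∈ B)
    (hmax : ∀ x ∈ B, k x ≤ k b0) (Wh : Finset K) (hWh : Wh.Nonempty) :
    ∑ S ∈ B.powerset, (-1:ℝ)^S.card *
        π ((S.image k ∪ Wh).min' (hWh.mono subset_union_right)) =
      π (Wh.min' hWh) - π (min (k b0) (Wh.min' hWh)) := by
  classical
  have hb0' : b0 ∉ B.erase b0 := notMem_erase _ _
  conv_lhs => rw [← Finset.insert_erase hb0]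
  rw [Finset.sum_powerset_insert hb0', ← Finset.sum_add_distrib]
  have step : ∀ t ∈ (B.erase b0).powerset,
      ((-1:ℝ)^t.card * π ((t.image k ∪ Wh).min' (hWh.mono subset_union_right)) +
       (-1:ℝ)^(insert b0 t).card *
        π (((insert b0 t).image k ∪ Wh).min' (hWh.mono subset_union_right)))
      = if t = ∅ then π (Wh.min' hWh) - π (min (k b0) (Wh.min' hWh)) else 0 := by
    intro t ht
    rw [mem_powerset] at ht
    have hb0t : b0 ∉ t := fun h => hb0' (ht h)
    have hcard : (insert b0 t).card = t.card + 1 := card_insert_of_notMem hb0t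
    have himg : (insert b0 t).image k ∪ Wh = insert (k b0) (t.image k ∪ Wh) := by
      rw [image_insert, insert_union]
    rcases eq_or_ne t ∅ with rfl | hne
    · have e1 : ((∅:Finset γ).image k ∪ Wh).min' (hWh.mono subset_union_right)
          = Wh.min' hWh := by
        apply le_antisymm
        · exact min'_le _ _ (mem_union_right _ (min'_mem _ hWh))
        · apply Finset.le_min'
          intro y hy
          simp only [image_empty, empty_union] at hy
          exact min'_le _ _ hy
      have e2 : (((insert b0 (∅:Finset γ)).image k) ∪ Wh).min'
            (hWh.mono subset_union_right) = min (k b0) (Wh.min' hWh) := by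
        apply le_antisymm
        · apply le_min
          · exact min'_le _ _ (by simp)
          · exact min'_le _ _ (mem_union_right _ (min'_mem _ hWh))
        · apply Finset.le_min'
          intro y hy
          simp only [image_insert, image_empty, insert_union, empty_union,
            mem_insert] at hy
          rcases hy with rfl | hy
          · exact min_le_left _ _
          · exact le_trans (min_le_right _ _) (min'_le _ _ hy)
      rw [if_pos rfl, e1, e2, hcard]
      simp only [card_empty, pow_zero, pow_one, one_mul]
      ring
    · rw [if_neg hne]
      have htne : t.Nonempty := nonempty_iff_ne_empty.2 hne
      have hU : (t.image k ∪ Wh).Nonempty := hWh.mono subset_union_right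
      obtain ⟨x, hx⟩ := htne
      have hxle : (t.image k ∪ Wh).min' hU ≤ k b0 :=
        le_trans (min'_le _ _ (mem_union_left _ (mem_image_of_mem k hx)))
          (hmax x (mem_of_mem_erase (ht hx)))
      have : ((insert b0 t).image k ∪ Wh).min' (hWh.mono subset_union_right)
          = (t.image k ∪ Wh).min' hU := by
        apply le_antisymm
        · exact min'_le _ _ (by rw [himg]; exact mem_insert_of_mem (min'_mem _ hU))
        · apply Finset.le_min'
          intro y hy
          rw [himg] at hy
          rcases mem_insert.1 hy with rfl | hy
          · exact hxle
          · exact min'_le _ _ hy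
      rw [this, hcard, pow_succ]
      ring
  rw [Finset.sum_congr rfl step, Finset.sum_ite_eq' _ (∅ : Finset γ)]
  simp

private lemma min'_congr {K : Type*} [LinearOrder K] {s t : Finset K} (h : s = t)
    (hs : s.Nonempty) (ht : t.Nonempty) : s.min' hs = t.min' ht := by
  subst h; rfl

private lemma min_key {d : ℕ} (u : EuclideanSpace ℝ (Fin d))
    (q : EuclideanSpace ℝ (Fin d) → ℝ)
    (P : Finset (EuclideanSpace ℝ (Fin d))) (hP : P.Nonempty) :
    (ofLex ((P.image (fun p => toLex ((inner ℝ p u : ℝ), q p))).min'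
        (hP.image _))).1 = P.inf' hP (fun p' => (inner ℝ p' u : ℝ)) ∧
    (ofLex ((P.image (fun p => toLex ((inner ℝ p u : ℝ), q p))).min'
        (hP.image _))).2 = minOnMinimizers u q P hP := by
  classical
  obtain ⟨p0, hp0, hk0⟩ := Finset.mem_image.1
    ((P.image (fun p => toLex ((inner ℝ p u : ℝ), q p))).min'_mem
      (hP.image (fun p => toLex ((inner ℝ p u : ℝ), q p))))
  have hle : ∀ p ∈ P, toLex (((inner ℝ p0 u : ℝ)), q p0) ≤ toLex (((inner ℝ p u : ℝ)), q p) :=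
    fun p hp => hk0 ▸ Finset.min'_le _ _
      (Finset.mem_image_of_mem (fun p => toLex ((inner ℝ p u : ℝ), q p)) hp)
  have hf : ∀ p ∈ P, (inner ℝ p0 u : ℝ) ≤ (inner ℝ p u : ℝ) := by
    intro p hp
    rcases Prod.Lex.le_iff.1 (hle p hp) with h | h
    · exact le_of_lt h
    · exact le_of_eq h.1
  have hinf : (inner ℝ p0 u : ℝ) = P.inf' hP (fun p' => (inner ℝ p' u : ℝ)) :=
    le_antisymm (Finset.le_inf' _ _ hf) (Finset.inf'_le _ hp0)
  rw [← hk0]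
  refine ⟨hinf, ?_⟩
  unfold minOnMinimizers
  apply le_antisymm
  · apply Finset.le_inf'
    intro p hp
    obtain ⟨hpP, hpe⟩ := Finset.mem_filter.1 hp
    rcases Prod.Lex.le_iff.1 (hle p hpP) with h | h
    · exact absurd h (by rw [hinf, hpe]; exact lt_irrefl _)
    · exact h.2
  · exact Finset.inf'_le _ (Finset.mem_filter.2 ⟨hp0, hinf⟩)

private lemma max_key {d : ℕ} (u : EuclideanSpace ℝ (Fin d))
    (q : EuclideanSpace ℝ (Fin d) → ℝ)
    (P : Finset (EuclideanSpace ℝ (Fin d))) (hP : P.Nonempty) :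
    (ofLex ((P.image (fun p => toLex ((inner ℝ p u : ℝ), q p))).max'
        (hP.image _))).1 = P.sup' hP (fun p' => (inner ℝ p' u : ℝ)) ∧
    (ofLex ((P.image (fun p => toLex ((inner ℝ p u : ℝ), q p))).max'
        (hP.image _))).2 = maxOnMaximizers u q P hP := by
  classical
  obtain ⟨p0, hp0, hk0⟩ := Finset.mem_image.1
    ((P.image (fun p => toLex ((inner ℝ p u : ℝ), q p))).max'_mem
      (hP.image (fun p => toLex ((inner ℝ p u : ℝ), q p))))
  have hle : ∀ p ∈ P, toLex (((inner ℝ p u : ℝ)), q p) ≤ toLex (((inner ℝ p0 u : ℝ)), q p0) :=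
    fun p hp => hk0 ▸ Finset.le_max' _ _
      (Finset.mem_image_of_mem (fun p => toLex ((inner ℝ p u : ℝ), q p)) hp)
  have hf : ∀ p ∈ P, (inner ℝ p u : ℝ) ≤ (inner ℝ p0 u : ℝ) := by
    intro p hp
    rcases Prod.Lex.le_iff.1 (hle p hp) with h | h
    · exact le_of_lt h
    · exact le_of_eq h.1
  have hsup : (inner ℝ p0 u : ℝ) = P.sup' hP (fun p' => (inner ℝ p' u : ℝ)) :=
    le_antisymm (Finset.le_sup' (fun p' => (inner ℝ p' u : ℝ)) hp0) (Finset.sup'_le _ _ hf)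
  rw [← hk0]
  refine ⟨hsup, ?_⟩
  unfold maxOnMaximizers
  apply le_antisymm
  · exact Finset.le_sup' _ (Finset.mem_filter.2 ⟨hp0, hsup⟩)
  · apply Finset.sup'_le
    intro p hp
    obtain ⟨hpP, hpe⟩ := Finset.mem_filter.1 hp
    rcases Prod.Lex.le_iff.1 (hle p hpP) with h | h
    · exact absurd h (by rw [hsup, hpe]; exact lt_irrefl _)
    · exact h.2


/-- Trichotomy for the alternating sum `∑_{S ⊆ B} (−1)^{|S|} m_q(S ∪ W)`:
it equals `m_q(W) − M_q(B)` if `max_{b∈B}⟨b,u⟩ < min_{w∈W}⟨w,u⟩`, it equals `0`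
if `max_{b∈B}⟨b,u⟩ > min_{w∈W}⟨w,u⟩`, and it equals `(m_q(W) − M_q(B))⁺` if
`max_{b∈B}⟨b,u⟩ = min_{w∈W}⟨w,u⟩`. -/
theorem alternating_sum_trichotomy (d : ℕ)
    [DecidableEq (EuclideanSpace ℝ (Fin d))]
    (B W : Finset (EuclideanSpace ℝ (Fin d))) (hB : B.Nonempty) (hW : W.Nonempty)
    (u : EuclideanSpace ℝ (Fin d)) (q : EuclideanSpace ℝ (Fin d) → ℝ) :
    (B.sup' hB (fun b => (inner ℝ b u : ℝ)) < W.inf' hW (fun w => (inner ℝ w u : ℝ)) →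
      (∑ S ∈ B.powerset,
          (-1 : ℝ) ^ S.card *
            minOnMinimizers u q (S ∪ W) (hW.mono Finset.subset_union_right)) =
        minOnMinimizers u q W hW - maxOnMaximizers u q B hB) ∧
    (W.inf' hW (fun w => (inner ℝ w u : ℝ)) < B.sup' hB (fun b => (inner ℝ b u : ℝ)) →
      (∑ S ∈ B.powerset,
          (-1 : ℝ) ^ S.card *
            minOnMinimizers u q (S ∪ W) (hW.mono Finset.subset_union_right)) = 0) ∧
    (B.sup' hB (fun b => (inner ℝ b u : ℝ)) = W.inf' hW (fun w => (inner ℝ w u : ℝ)) →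
      (∑ S ∈ B.powerset,
          (-1 : ℝ) ^ S.card *
            minOnMinimizers u q (S ∪ W) (hW.mono Finset.subset_union_right)) =
        max 0 (minOnMinimizers u q W hW - maxOnMaximizers u q B hB)) := by
  classical
  obtain ⟨b0, hb0, hkb0⟩ := Finset.mem_image.1
    ((B.image (fun p => toLex ((inner ℝ p u : ℝ), q p))).max'_mem
      (hB.image (fun p => toLex ((inner ℝ p u : ℝ), q p))))
  have hmax : ∀ x ∈ B, (fun p => toLex ((inner ℝ p u : ℝ), q p)) x
      ≤ (fun p => toLex ((inner ℝ p u : ℝ), q p)) b0 := by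
    intro x hx
    have h1 := Finset.le_max' _ _
      (Finset.mem_image_of_mem (fun p => toLex ((inner ℝ p u : ℝ), q p)) hx)
    rw [← hkb0] at h1
    exact h1
  have hb1 : (inner ℝ b0 u : ℝ) = B.sup' hB (fun b => (inner ℝ b u : ℝ)) := by
    rw [← (max_key u q B hB).1, ← hkb0]
    rfl
  have hb2 : q b0 = maxOnMaximizers u q B hB := by
    rw [← (max_key u q B hB).2, ← hkb0]
    rfl
  have hw1 := (min_key u q W hW).1
  have hw2 := (min_key u q W hW).2
  have hsum : (∑ S ∈ B.powerset,
      (-1 : ℝ) ^ S.card *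
        minOnMinimizers u q (S ∪ W) (hW.mono Finset.subset_union_right)) =
      (ofLex ((W.image (fun p => toLex ((inner ℝ p u : ℝ), q p))).min'
          (hW.image _))).2 -
      (ofLex (min (toLex ((inner ℝ b0 u : ℝ), q b0))
          ((W.image (fun p => toLex ((inner ℝ p u : ℝ), q p))).min'
            (hW.image _)))).2 := by
    rw [← aux_sum (fun p => toLex ((inner ℝ p u : ℝ), q p))
      (fun x => (ofLex x).2) B b0 hb0 hmax
      (W.image (fun p => toLex ((inner ℝ p u : ℝ), q p))) (hW.image _)]
    apply Finset.sum_congr rfl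
    intro S hS
    congr 1
    rw [← (min_key u q (S ∪ W) (hW.mono Finset.subset_union_right)).2]
    exact congrArg (fun x : Lex (ℝ × ℝ) => (ofLex x).2)
      (min'_congr (by rw [Finset.image_union]) _ _)
  refine ⟨?_, ?_, ?_⟩
  · intro h
    have hlt : toLex ((inner ℝ b0 u : ℝ), q b0) <
        (W.image (fun p => toLex ((inner ℝ p u : ℝ), q p))).min' (hW.image _) :=
      (@Prod.Lex.toLex_lt_toLex _ _ _ _ ((inner ℝ b0 u : ℝ), q b0)
        (ofLex ((W.image (fun p => toLex ((inner ℝ p u : ℝ), q p))).min'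
          (hW.image _)))).2 (Or.inl (by rw [hb1, hw1]; exact h))
    rw [hsum, min_eq_left hlt.le, ← hw2, ← hb2]
    rfl
  · intro h
    have hlt : (W.image (fun p => toLex ((inner ℝ p u : ℝ), q p))).min' (hW.image _)
        < toLex ((inner ℝ b0 u : ℝ), q b0) :=
      (@Prod.Lex.toLex_lt_toLex _ _ _ _ (ofLex ((W.image (fun p => toLex ((inner ℝ p u : ℝ), q p))).min'
        (hW.image _))) ((inner ℝ b0 u : ℝ), q b0)).2 (Or.inl (by rw [hw1, hb1]; exact h))
    rw [hsum, min_eq_right hlt.le, sub_self]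
  · intro h
    have heq1 : (inner ℝ b0 u : ℝ) =
        (ofLex ((W.image (fun p => toLex ((inner ℝ p u : ℝ), q p))).min'
          (hW.image _))).1 := by
      rw [hb1, hw1]; exact h
    rcases lt_trichotomy (q b0)
        ((ofLex ((W.image (fun p => toLex ((inner ℝ p u : ℝ), q p))).min'
          (hW.image _))).2) with hq | hq | hq
    · have hlt : toLex ((inner ℝ b0 u : ℝ), q b0) <
          (W.image (fun p => toLex ((inner ℝ p u : ℝ), q p))).min' (hW.image _) :=
        (@Prod.Lex.lt_iff _ _ _ _ ((inner ℝ b0 u : ℝ), q b0)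
          (ofLex ((W.image (fun p => toLex ((inner ℝ p u : ℝ), q p))).min'
            (hW.image _)))).2 (Or.inr ⟨heq1, hq⟩)
      rw [hsum, min_eq_left hlt.le, ← hw2, ← hb2,
        max_eq_right (sub_nonneg.2 hq.le)]
      rfl
    · have heq : toLex ((inner ℝ b0 u : ℝ), q b0) =
          (W.image (fun p => toLex ((inner ℝ p u : ℝ), q p))).min' (hW.image _) := by
        have : ((inner ℝ b0 u : ℝ), q b0) =
            ofLex ((W.image (fun p => toLex ((inner ℝ p u : ℝ), q p))).min'
              (hW.image _)) := Prod.ext heq1 hq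
        exact congrArg toLex this
      rw [hsum, heq, min_self, sub_self, ← hw2, ← hb2, ← hq, sub_self, max_self]
    · have hlt : (W.image (fun p => toLex ((inner ℝ p u : ℝ), q p))).min' (hW.image _)
          < toLex ((inner ℝ b0 u : ℝ), q b0) :=
        Prod.Lex.lt_iff.2 (Or.inr ⟨heq1.symm, hq⟩)
      rw [hsum, min_eq_right hlt.le, sub_self, ← hw2, ← hb2,
        max_eq_left (by linarith)]
end
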